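/- Let X be a random variable on a probability space with X > 0 almost surely, let N ≥ 2 be a natural number, let s' > 0, and set c = (N!)^{-1/N}. Then the partial sum ∑_{n=0}^{N-1} (1/n!) E[(s'X)^n e^{-s'X}] is strictly less than ∑_{n=1}^{N} (-1)^{n-1} (N choose n) E[e^{-n c s' X}]. (This is the paper's Proposition 1: the left-hand side equals ∑_{n=0}^{N-1} ((-s)^n/n!) d^n/ds^n L_X(s) evaluated at s = s', where L_X(s) = E[e^{-sX}] is the Laplace transform of X.) -/

import Mathlib

open MeasureTheory ProbabilityTheory Real

open Filter Set

namespace AlzerAux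

lemma exp_quad {u : ℝ} (hu : 0 ≤ u) : 1 + u + u^2/2 ≤ Real.exp u := by
  have h := Real.sum_le_exp_of_nonneg hu 3
  simp [Finset.sum_range_succ, Nat.factorial] at h
  nlinarith [h]

lemma one_sub_exp_bound {u : ℝ} (hu : 0 ≤ u) :
    (1 - Real.exp (-u)) * (1 + u/2) ≤ u := by
  set f : ℝ → ℝ := fun v => v - (1 - Real.exp (-v)) * (1 + v/2) with hf
  have hder : ∀ v : ℝ, HasDerivAt f (1 - (Real.exp (-v) * (1 + v/2) + (1 - Real.exp (-v)) * (1/2))) v := by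
    intro v
    have h1 : HasDerivAt (fun w : ℝ => Real.exp (-w)) (-Real.exp (-v)) v := by
      simpa [Function.comp_def, Pi.sub_def, Pi.add_def, Pi.neg_def, Pi.mul_def, Pi.inv_def] using (Real.hasDerivAt_exp (-v)).comp v (hasDerivAt_neg v)
    have h2 : HasDerivAt (fun w : ℝ => 1 - Real.exp (-w)) (Real.exp (-v)) v := by
      simpa [Function.comp_def, Pi.sub_def, Pi.add_def, Pi.neg_def, Pi.mul_def, Pi.inv_def] using (hasDerivAt_const v (1:ℝ)).sub h1
    have h3 : HasDerivAt (fun w : ℝ => 1 + w/2) (1/2 : ℝ) v := by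
      simpa [Function.comp_def, Pi.sub_def, Pi.add_def, Pi.neg_def, Pi.mul_def, Pi.inv_def] using (hasDerivAt_const v (1:ℝ)).add ((hasDerivAt_id v).div_const 2)
    simpa [Function.comp_def, Pi.sub_def, Pi.add_def, Pi.neg_def, Pi.mul_def, Pi.inv_def] using (hasDerivAt_id v).sub (h2.mul h3)
  have hmono : MonotoneOn f (Set.Ici (0:ℝ)) := by
    apply monotoneOn_of_deriv_nonneg (convex_Ici 0)
    · exact fun v _ => ((hder v).continuousAt).continuousWithinAt
    · intro v _
      exact ((hder v).differentiableAt).differentiableWithinAt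
    · intro v hv
      rw [interior_Ici] at hv
      rw [(hder v).deriv]
      have h4 : Real.exp (-v) * (1 + v) ≤ 1 := by
        have := Real.add_one_le_exp v
        have hev : 0 < Real.exp (-v) := Real.exp_pos _
        have hev2 : 0 < Real.exp v := Real.exp_pos _
        rw [Real.exp_neg, inv_mul_eq_div, div_le_one hev2]
        linarith
      nlinarith [Real.exp_pos (-v)]
  have h0 : f 0 = 0 := by simp [hf]
  have := hmono (Set.mem_Ici.mpr le_rfl) (Set.mem_Ici.mpr hu) hu
  rw [h0] at this
  simp only [hf] at this
  linarith

end AlzerAux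


namespace AlzerAux2

noncomputable def g (u : ℝ) : ℝ := 1/u - 1/(Real.exp u - 1)

lemma exp_sub_one_pos {u : ℝ} (hu : 0 < u) : 0 < Real.exp u - 1 := by
  have h : (1:ℝ) < Real.exp u := by
    rw [← Real.exp_zero]; exact Real.exp_lt_exp.mpr hu
  linarith

lemma sinh_ineq {u : ℝ} (hu : 0 < u) : u * Real.exp (u/2) < Real.exp u - 1 := by
  have h1 : u/2 < Real.sinh (u/2) := Real.self_lt_sinh_iff.mpr (by linarith)
  have h2 : Real.sinh (u/2) = (Real.exp (u/2) - Real.exp (-(u/2)))/2 := Real.sinh_eq _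
  have h3 : Real.exp (u/2) * Real.exp (u/2) = Real.exp u := by
    rw [← Real.exp_add]; ring_nf
  have h4 : Real.exp (u/2) * Real.exp (-(u/2)) = 1 := by
    rw [← Real.exp_add]; simp
  have h5 : 0 < Real.exp (u/2) := Real.exp_pos _
  nlinarith

lemma hasDerivAt_g {u : ℝ} (hu : 0 < u) :
    HasDerivAt g (-(u^2)⁻¹ + Real.exp u / (Real.exp u - 1)^2) u := by
  have h1 : HasDerivAt (fun v : ℝ => 1/v) (-(u^2)⁻¹) u := by
    simpa [one_div] using hasDerivAt_inv (ne_of_gt hu)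
  have h2 : HasDerivAt (fun v : ℝ => Real.exp v - 1) (Real.exp u) u := by
    simpa using (Real.hasDerivAt_exp u).sub_const 1
  have h3 : HasDerivAt (fun v : ℝ => 1/(Real.exp v - 1))
      (-(Real.exp u / (Real.exp u - 1)^2)) u := by
    have := h2.inv (ne_of_gt (exp_sub_one_pos hu))
    simpa [Function.comp_def, Pi.sub_def, Pi.add_def, Pi.neg_def, Pi.mul_def, Pi.inv_def, one_div, neg_div] using this
  show HasDerivAt (fun v : ℝ => 1/v - 1/(Real.exp v - 1)) _ u
  simpa [Function.comp_def, Pi.sub_def, Pi.add_def, Pi.neg_def, Pi.mul_def, Pi.inv_def, sub_neg_eq_add] using h1.sub h3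

lemma g_strictAnti : StrictAntiOn g (Set.Ioi (0:ℝ)) := by
  apply strictAntiOn_of_deriv_neg (convex_Ioi 0)
  · exact fun v hv => ((hasDerivAt_g hv).continuousAt).continuousWithinAt
  · intro v hv
    rw [interior_Ioi] at hv
    rw [(hasDerivAt_g hv).deriv]
    have h1 := sinh_ineq hv
    have h2 : 0 < Real.exp v - 1 := exp_sub_one_pos hv
    have h3 : 0 < Real.exp v := Real.exp_pos _
    have h4 : Real.exp (v/2) * Real.exp (v/2) = Real.exp v := by
      rw [← Real.exp_add]; ring_nf
    have h5 : 0 < Real.exp (v/2) := Real.exp_pos _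
    have hv0 : (0:ℝ) < v := hv
    have h6 := mul_self_lt_mul_self (by positivity : (0:ℝ) ≤ v * Real.exp (v/2)) h1
    have key : v^2 * Real.exp v < (Real.exp v - 1)^2 := by nlinarith [h6, h4, sq_nonneg v]
    have h7 : Real.exp v/(Real.exp v - 1)^2 < 1/v^2 := by
      rw [div_lt_div_iff₀ (by positivity) (by positivity)]
      nlinarith [key]
    have h8 : (v^2)⁻¹ = 1/v^2 := by rw [one_div]
    linarith [h7, h8.ge, h8.le]

lemma factorial_lt_pow {N : ℕ} (hN : 2 ≤ N) :
    (N.factorial : ℝ) < (((N:ℝ)+1)/2)^N := by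
  induction N, hN using Nat.le_induction with
  | base => norm_num [Nat.factorial]
  | succ M hM ih =>
    have hM1 : (0:ℝ) < (M:ℝ) + 1 := by positivity
    have ha : (0:ℝ) ≤ 1/((M:ℝ)+1) := by positivity
    have key : (2:ℝ) ≤ (((M:ℝ)+2)/((M:ℝ)+1))^(M+1) := by
      have h := one_add_mul_le_pow (by linarith : (-2:ℝ) ≤ 1/((M:ℝ)+1)) (M+1)
      have h2 : (1:ℝ) + ((M+1 : ℕ):ℝ) * (1/((M:ℝ)+1)) = 2 := by
        push_cast; field_simp; norm_num
      have h3 : (1:ℝ) + 1/((M:ℝ)+1) = ((M:ℝ)+2)/((M:ℝ)+1) := by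
        field_simp; ring
      rw [h2, h3] at h
      exact h
    have e1 : (((M:ℝ)+2)/2)^(M+1)
        = (((M:ℝ)+2)/((M:ℝ)+1))^(M+1) * (((M:ℝ)+1)/2)^(M+1) := by
      rw [← mul_pow]; congr 1; field_simp
    have e2 : 2 * (((M:ℝ)+1)/2)^(M+1)
        ≤ (((M:ℝ)+2)/((M:ℝ)+1))^(M+1) * (((M:ℝ)+1)/2)^(M+1) :=
      mul_le_mul_of_nonneg_right key (by positivity)
    have e3 : 2 * (((M:ℝ)+1)/2)^(M+1) = ((M:ℝ)+1) * (((M:ℝ)+1)/2)^M := by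
      rw [pow_succ]; ring
    have e4 : ((M:ℝ)+1) * (M.factorial:ℝ) < ((M:ℝ)+1) * (((M:ℝ)+1)/2)^M :=
      (mul_lt_mul_iff_right₀ hM1).mpr ih
    have hgoal : ((M+1 : ℕ):ℝ) + 1 = (M:ℝ) + 2 := by push_cast; ring
    rw [hgoal]
    push_cast [Nat.factorial_succ]
    linarith

end AlzerAux2

namespace Alzer

noncomputable def Pf (N : ℕ) (x : ℝ) : ℝ := ∑ n ∈ Finset.range N, x^n / (n.factorial : ℝ)
noncomputable def Gf (N : ℕ) (c x : ℝ) : ℝ := (1 - Real.exp (-(c*x)))^N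
noncomputable def Df (N : ℕ) (c x : ℝ) : ℝ := (1 - Real.exp (-x) * Pf N x) - Gf N c x
noncomputable def Fd (N : ℕ) (x : ℝ) : ℝ := Real.exp (-x) * x^(N-1) / ((N-1).factorial : ℝ)
noncomputable def Gd (N : ℕ) (c x : ℝ) : ℝ :=
  (N:ℝ) * (1 - Real.exp (-(c*x)))^(N-1) * (c * Real.exp (-(c*x)))
noncomputable def Hf (N : ℕ) (c x : ℝ) : ℝ :=
  ((N:ℝ)-1) * Real.log x - x + c*x - ((N:ℝ)-1)*Real.log (1 - Real.exp (-(c*x)))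
    - Real.log (((N-1).factorial : ℝ) * ((N:ℝ) * c))
noncomputable def Hd (N : ℕ) (c x : ℝ) : ℝ :=
  ((N:ℝ)-1) * (1/x - c*Real.exp (-(c*x))/(1 - Real.exp (-(c*x)))) - (1-c)

lemma c_facts (N : ℕ) (hN : 2 ≤ N) {c : ℝ}
    (hc : c = (N.factorial : ℝ) ^ (-(1 / N : ℝ))) :
    0 < c ∧ c < 1 ∧ 2/((N:ℝ)+1) < c ∧
      Real.log c = -(1/(N:ℝ)) * Real.log (N.factorial : ℝ) := by
  have hfac0 : (0:ℝ) < (N.factorial : ℝ) := by exact_mod_cast N.factorial_pos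
  have hN0 : (N:ℝ) ≠ 0 := by positivity
  have hc0 : 0 < c := hc ▸ Real.rpow_pos_of_pos hfac0 _
  have hlog : Real.log c = -(1/(N:ℝ)) * Real.log (N.factorial : ℝ) := by
    rw [hc, Real.log_rpow hfac0]
  have hcN : c^N = (N.factorial : ℝ)⁻¹ := by
    rw [hc, ← Real.rpow_natCast ((N.factorial : ℝ) ^ (-(1/N : ℝ))) N,
      ← Real.rpow_mul hfac0.le]
    have : (-(1/N : ℝ)) * (N:ℝ) = -1 := by field_simp
    rw [this, Real.rpow_neg_one]
  have hfac1 : (1:ℝ) < (N.factorial : ℝ) := by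
    have h2 : 2 ≤ N.factorial := le_trans hN (Nat.self_le_factorial N)
    exact_mod_cast lt_of_lt_of_le one_lt_two (by exact_mod_cast h2)
  have hc1 : c < 1 := by
    by_contra h
    push_neg at h
    have h1 : (1:ℝ) ≤ c^N := one_le_pow₀ h
    have h2 : c^N < 1 := by
      rw [hcN]
      exact inv_lt_one_of_one_lt₀ hfac1
    linarith
  have hc2 : 2/((N:ℝ)+1) < c := by
    have hflt := AlzerAux2.factorial_lt_pow hN
    have hb0 : (0:ℝ) < ((N:ℝ)+1)/2 := by positivity
    have hbN : (2/((N:ℝ)+1))^N < c^N := by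
      rw [hcN]
      have he : (2/((N:ℝ)+1)) = (((N:ℝ)+1)/2)⁻¹ := by
        rw [inv_div]
      rw [he, inv_pow]
      exact inv_strictAnti₀ (by positivity) hflt
    exact lt_of_pow_lt_pow_left₀ N hc0.le hbN
  exact ⟨hc0, hc1, hc2, hlog⟩

lemma hasDerivAt_negexp (x : ℝ) : HasDerivAt (fun y : ℝ => Real.exp (-y)) (-Real.exp (-x)) x := by
  simpa [Function.comp_def, Pi.sub_def, Pi.add_def, Pi.neg_def, Pi.mul_def, Pi.inv_def] using (Real.hasDerivAt_exp (-x)).comp x (hasDerivAt_neg x)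

lemma hasDerivAt_expP (M : ℕ) (hM : 1 ≤ M) (x : ℝ) :
    HasDerivAt (fun y => Real.exp (-y) * Pf M y)
      (-(Real.exp (-x) * x^(M-1) / ((M-1).factorial : ℝ))) x := by
  induction M, hM using Nat.le_induction with
  | base =>
    have heq : (fun y : ℝ => Real.exp (-y) * Pf 1 y) = fun y => Real.exp (-y) := by
      funext y; simp [Pf]
    rw [heq]
    simpa using hasDerivAt_negexp x
  | succ M hM ih =>
    have heq : (fun y : ℝ => Real.exp (-y) * Pf (M+1) y)
        = fun y => Real.exp (-y) * Pf M y + Real.exp (-y) * (y^M / (M.factorial:ℝ)) := by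
      funext y; simp [Pf, Finset.sum_range_succ]; ring
    rw [heq]
    have hpow : HasDerivAt (fun y : ℝ => y^M / (M.factorial:ℝ))
        ((M:ℝ)*x^(M-1) / (M.factorial:ℝ)) x := by
      simpa using (hasDerivAt_pow M x).div_const (M.factorial:ℝ)
    have h2 := (hasDerivAt_negexp x).mul hpow
    have h3 := ih.add h2
    refine HasDerivAt.congr_deriv h3 ?_
    have hMf : (M.factorial : ℝ) = (M:ℝ) * ((M-1).factorial : ℝ) := by
      rw [← Nat.cast_mul]
      norm_cast
      exact (Nat.mul_factorial_pred (by omega)).symm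
    have h1 : ((M-1).factorial : ℝ) ≠ 0 := by positivity
    have h0 : (M.factorial : ℝ) ≠ 0 := by positivity
    simp only [Nat.add_sub_cancel]
    rw [hMf]
    field_simp
    ring

lemma hasDerivAt_Df (N : ℕ) (c : ℝ) (hN : 2 ≤ N) (x : ℝ) :
    HasDerivAt (Df N c) (Fd N x - Gd N c x) x := by
  have h1 := hasDerivAt_expP N (by omega) x
  have hF : HasDerivAt (fun y => 1 - Real.exp (-y) * Pf N y) (Fd N x) x := by
    simpa [Function.comp_def, Pi.sub_def, Pi.add_def, Pi.neg_def, Pi.mul_def, Pi.inv_def, Fd, sub_neg_eq_add] using (hasDerivAt_const x (1:ℝ)).sub h1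
  have hlin : HasDerivAt (fun y : ℝ => -(c*y)) (-c) x := by
    simpa [Function.comp_def, Pi.sub_def, Pi.add_def, Pi.neg_def, Pi.mul_def, Pi.inv_def] using ((hasDerivAt_id x).const_mul c).neg
  have hexp : HasDerivAt (fun y : ℝ => Real.exp (-(c*y))) (-(c * Real.exp (-(c*x)))) x := by
    have := (Real.hasDerivAt_exp (-(c*x))).comp x hlin
    simpa [Function.comp_def, Pi.sub_def, Pi.add_def, Pi.neg_def, Pi.mul_def, Pi.inv_def, mul_comm] using this
  have hu : HasDerivAt (fun y : ℝ => 1 - Real.exp (-(c*y))) (c * Real.exp (-(c*x))) x := by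
    simpa [Function.comp_def, Pi.sub_def, Pi.add_def, Pi.neg_def, Pi.mul_def, Pi.inv_def, sub_neg_eq_add] using (hasDerivAt_const x (1:ℝ)).sub hexp
  have hG : HasDerivAt (fun y => Gf N c y) (Gd N c x) x := by
    have := hu.pow N
    simpa [Function.comp_def, Pi.sub_def, Pi.add_def, Pi.neg_def, Pi.mul_def, Pi.inv_def, Pi.pow_def, Gf, Gd] using this
  exact hF.sub hG

lemma one_sub_exp_pos {c x : ℝ} (hc0 : 0 < c) (hx : 0 < x) :
    0 < 1 - Real.exp (-(c*x)) := by
  have h : Real.exp (-(c*x)) < Real.exp 0 := Real.exp_lt_exp.mpr (by nlinarith)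
  rw [Real.exp_zero] at h
  linarith

lemma Fd_pos {N : ℕ} {x : ℝ} (hx : 0 < x) : 0 < Fd N x := by
  unfold Fd
  have h1 : (0:ℝ) < ((N-1).factorial : ℝ) := by exact_mod_cast (N-1).factorial_pos
  positivity

lemma Gd_pos {N : ℕ} {c x : ℝ} (hN : 2 ≤ N) (hc0 : 0 < c) (hx : 0 < x) :
    0 < Gd N c x := by
  unfold Gd
  have h1 := one_sub_exp_pos hc0 hx
  have h2 : (0:ℝ) < (N:ℝ) := by exact_mod_cast Nat.pos_of_ne_zero (by omega)
  exact mul_pos (mul_pos h2 (pow_pos h1 _)) (mul_pos hc0 (Real.exp_pos _))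

lemma log_Fd {N : ℕ} {x : ℝ} (hN : 2 ≤ N) (hx : 0 < x) :
    Real.log (Fd N x) = -x + ((N:ℝ)-1)*Real.log x - Real.log (((N-1).factorial : ℝ)) := by
  unfold Fd
  have h1 : ((N-1).factorial : ℝ) ≠ 0 := by positivity
  have h2 : Real.exp (-x) ≠ 0 := Real.exp_ne_zero _
  have h3 : x^(N-1) ≠ 0 := pow_ne_zero _ (ne_of_gt hx)
  rw [Real.log_div (mul_ne_zero h2 h3) h1, Real.log_mul h2 h3, Real.log_exp, Real.log_pow]
  have h4 : ((N-1 : ℕ):ℝ) = (N:ℝ) - 1 := by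
    have : 1 ≤ N := by omega
    push_cast [Nat.cast_sub this]; ring
  rw [h4]

lemma log_Gd {N : ℕ} {c x : ℝ} (hN : 2 ≤ N) (hc0 : 0 < c) (hx : 0 < x) :
    Real.log (Gd N c x) = ((N:ℝ)-1)*Real.log (1 - Real.exp (-(c*x)))
      + Real.log ((N:ℝ)*c) - c*x := by
  unfold Gd
  have hA := one_sub_exp_pos hc0 hx
  have hN0 : (N:ℝ) ≠ 0 := by
    have : (0:ℝ) < (N:ℝ) := by exact_mod_cast Nat.pos_of_ne_zero (by omega)
    exact ne_of_gt this
  have h1 : (1 - Real.exp (-(c*x)))^(N-1) ≠ 0 := pow_ne_zero _ (ne_of_gt hA)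
  have h2 : c * Real.exp (-(c*x)) ≠ 0 := mul_ne_zero (ne_of_gt hc0) (Real.exp_ne_zero _)
  rw [Real.log_mul (mul_ne_zero hN0 h1) h2, Real.log_mul hN0 h1,
    Real.log_mul (ne_of_gt hc0) (Real.exp_ne_zero _), Real.log_exp, Real.log_pow,
    Real.log_mul hN0 (ne_of_gt hc0)]
  have h4 : ((N-1 : ℕ):ℝ) = (N:ℝ) - 1 := by
    have : 1 ≤ N := by omega
    push_cast [Nat.cast_sub this]; ring
  rw [h4]; ring

lemma Hf_eq {N : ℕ} {c x : ℝ} (hN : 2 ≤ N) (hc0 : 0 < c) (hx : 0 < x) :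
    Hf N c x = Real.log (Fd N x) - Real.log (Gd N c x) := by
  rw [log_Fd hN hx, log_Gd hN hc0 hx]
  unfold Hf
  have hN0 : (N:ℝ) ≠ 0 := by
    have : (0:ℝ) < (N:ℝ) := by exact_mod_cast Nat.pos_of_ne_zero (by omega)
    exact ne_of_gt this
  have h1 : ((N-1).factorial : ℝ) ≠ 0 := by positivity
  rw [Real.log_mul h1 (mul_ne_zero hN0 (ne_of_gt hc0))]
  ring

lemma Hf_pos_iff {N : ℕ} {c x : ℝ} (hN : 2 ≤ N) (hc0 : 0 < c) (hx : 0 < x) :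
    (0 < Hf N c x ↔ Gd N c x < Fd N x) := by
  rw [Hf_eq hN hc0 hx, sub_pos, Real.log_lt_log_iff (Gd_pos hN hc0 hx) (Fd_pos hx)]

lemma Hf_neg_iff {N : ℕ} {c x : ℝ} (hN : 2 ≤ N) (hc0 : 0 < c) (hx : 0 < x) :
    (Hf N c x < 0 ↔ Fd N x < Gd N c x) := by
  rw [Hf_eq hN hc0 hx, sub_neg, Real.log_lt_log_iff (Fd_pos hx) (Gd_pos hN hc0 hx)]

lemma hasDerivAt_Hf {N : ℕ} {c x : ℝ} (hc0 : 0 < c) (hx : 0 < x) :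
    HasDerivAt (Hf N c) (Hd N c x) x := by
  have hA := one_sub_exp_pos hc0 hx
  have hlog1 : HasDerivAt (fun y : ℝ => ((N:ℝ)-1) * Real.log y) (((N:ℝ)-1) * x⁻¹) x :=
    (Real.hasDerivAt_log (ne_of_gt hx)).const_mul _
  have hlin : HasDerivAt (fun y : ℝ => -(c*y)) (-c) x := by
    simpa [Function.comp_def, Pi.sub_def, Pi.add_def, Pi.neg_def, Pi.mul_def, Pi.inv_def] using ((hasDerivAt_id x).const_mul c).neg
  have hexp : HasDerivAt (fun y : ℝ => Real.exp (-(c*y))) (-(c * Real.exp (-(c*x)))) x := by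
    have := (Real.hasDerivAt_exp (-(c*x))).comp x hlin
    simpa [Function.comp_def, Pi.sub_def, Pi.add_def, Pi.neg_def, Pi.mul_def, Pi.inv_def, mul_comm] using this
  have hu : HasDerivAt (fun y : ℝ => 1 - Real.exp (-(c*y))) (c * Real.exp (-(c*x))) x := by
    simpa [Function.comp_def, Pi.sub_def, Pi.add_def, Pi.neg_def, Pi.mul_def, Pi.inv_def, sub_neg_eq_add] using (hasDerivAt_const x (1:ℝ)).sub hexp
  have hlog2 : HasDerivAt (fun y : ℝ => ((N:ℝ)-1) * Real.log (1 - Real.exp (-(c*y))))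
      (((N:ℝ)-1) * (c * Real.exp (-(c*x)) / (1 - Real.exp (-(c*x))))) x :=
    (hu.log (ne_of_gt hA)).const_mul _
  have hid : HasDerivAt (fun y : ℝ => y) 1 x := hasDerivAt_id x
  have hcx : HasDerivAt (fun y : ℝ => c*y) c x := by
    simpa using (hasDerivAt_id x).const_mul c
  have h := ((((hlog1.sub hid).add hcx).sub hlog2).sub
    (hasDerivAt_const x (Real.log (((N-1).factorial : ℝ) * ((N:ℝ)*c)))))
  refine HasDerivAt.congr_deriv h ?_
  unfold Hd
  field_simp
  ring

lemma Hd_eq_g {N : ℕ} {c x : ℝ} (hc0 : 0 < c) (hx : 0 < x) :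
    Hd N c x = ((N:ℝ)-1) * (c * AlzerAux2.g (c*x)) - (1-c) := by
  unfold Hd AlzerAux2.g
  have hA := one_sub_exp_pos hc0 hx
  have hB : 0 < Real.exp (c*x) - 1 := AlzerAux2.exp_sub_one_pos (by positivity)
  have hprod : Real.exp (c*x) * Real.exp (-(c*x)) = 1 := by
    rw [← Real.exp_add]; simp
  have hkey : c * Real.exp (-(c*x)) / (1 - Real.exp (-(c*x))) = c / (Real.exp (c*x) - 1) := by
    rw [div_eq_div_iff (ne_of_gt hA) (ne_of_gt hB)]
    linear_combination c * hprod
  rw [hkey]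
  have h2 : c * (1/(c*x) - 1/(Real.exp (c*x) - 1))
      = 1/x - c/(Real.exp (c*x) - 1) := by
    field_simp
  rw [h2]

lemma Hd_strictAnti {N : ℕ} {c : ℝ} (hN : 2 ≤ N) (hc0 : 0 < c) :
    StrictAntiOn (Hd N c) (Set.Ioi (0:ℝ)) := by
  intro x hx y hy hxy
  rw [Set.mem_Ioi] at hx hy
  rw [Hd_eq_g hc0 hx, Hd_eq_g hc0 hy]
  have hg : AlzerAux2.g (c*y) < AlzerAux2.g (c*x) :=
    AlzerAux2.g_strictAnti (by simp [Set.mem_Ioi]; positivity)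
      (by simp [Set.mem_Ioi]; positivity) (by nlinarith)
  have hN1 : (1:ℝ) ≤ (N:ℝ) - 1 := by
    have : (2:ℝ) ≤ (N:ℝ) := by exact_mod_cast hN
    linarith
  have hmul := mul_lt_mul_of_pos_left hg (show (0:ℝ) < ((N:ℝ)-1)*c by nlinarith)
  nlinarith [hmul]

lemma cexp_frac {c x : ℝ} (hc0 : 0 < c) (hx : 0 < x) :
    c * Real.exp (-(c*x)) / (1 - Real.exp (-(c*x))) = c / (Real.exp (c*x) - 1) := by
  have hA := one_sub_exp_pos hc0 hx
  have hB : 0 < Real.exp (c*x) - 1 := AlzerAux2.exp_sub_one_pos (by positivity)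
  have hprod : Real.exp (c*x) * Real.exp (-(c*x)) = 1 := by
    rw [← Real.exp_add]; simp
  rw [div_eq_div_iff (ne_of_gt hA) (ne_of_gt hB)]
  linear_combination c * hprod

lemma Hd_pos_small {N : ℕ} {c x : ℝ} (hN : 2 ≤ N) (hc0 : 0 < c) (hc1 : c < 1)
    (hx : 0 < x) (hcond : (1-c)*c*x < 2*(((N:ℝ)+1)*c/2 - 1)) :
    0 < Hd N c x := by
  have hu : 0 < c*x := by positivity
  have hB : 0 < Real.exp (c*x) - 1 := AlzerAux2.exp_sub_one_pos hu
  have hNR : (2:ℝ) ≤ (N:ℝ) := by exact_mod_cast hN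
  have hE1 : c*x*(1+c*x/2) ≤ Real.exp (c*x) - 1 := by
    nlinarith [AlzerAux.exp_quad (le_of_lt hu)]
  have hfrac : c/(Real.exp (c*x) - 1) ≤ c/(c*x*(1+c*x/2)) :=
    div_le_div_of_nonneg_left hc0.le (by positivity) hE1
  have heq2 : c/(c*x*(1+c*x/2)) = 1/x - c/(2+c*x) := by
    field_simp
    ring
  have hstep : c/(2+c*x) ≤ 1/x - c/(Real.exp (c*x) - 1) := by
    rw [heq2] at hfrac; linarith
  have hmul : ((N:ℝ)-1)*(c/(2+c*x)) ≤ ((N:ℝ)-1)*(1/x - c/(Real.exp (c*x) - 1)) :=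
    mul_le_mul_of_nonneg_left hstep (by linarith)
  have hNc : (1-c)*(2+c*x) < ((N:ℝ)-1)*c := by nlinarith
  have hfin : (1-c) < ((N:ℝ)-1)*(c/(2+c*x)) := by
    rw [mul_div_assoc', lt_div_iff₀ (by positivity)]
    linarith
  unfold Hd
  rw [cexp_frac hc0 hx]
  linarith

lemma Hd_neg_large {N : ℕ} {c x : ℝ} (hN : 2 ≤ N) (hc0 : 0 < c) (hc1 : c < 1)
    (hx : 0 < x) (hxgt : ((N:ℝ)-1)/(1-c) < x) :
    Hd N c x < 0 := by
  have hA := one_sub_exp_pos hc0 hx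
  have hNR : (2:ℝ) ≤ (N:ℝ) := by exact_mod_cast hN
  have hq : 0 < c*Real.exp (-(c*x))/(1 - Real.exp (-(c*x))) :=
    div_pos (by positivity) hA
  have h2 : ((N:ℝ)-1) < x*(1-c) := by
    have := (div_lt_iff₀ (by linarith : (0:ℝ) < 1-c)).mp hxgt
    linarith
  have h3 : ((N:ℝ)-1)*(1/x) < 1-c := by
    rw [mul_one_div, div_lt_iff₀ hx]
    nlinarith
  have h4 : ((N:ℝ)-1)*(1/x - c*Real.exp (-(c*x))/(1 - Real.exp (-(c*x))))
      ≤ ((N:ℝ)-1)*(1/x) := by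
    apply mul_le_mul_of_nonneg_left _ (by linarith)
    linarith
  unfold Hd
  linarith

lemma continuousAt_Hd {N : ℕ} {c x : ℝ} (hc0 : 0 < c) (hx : 0 < x) :
    ContinuousAt (Hd N c) x := by
  have hA := one_sub_exp_pos hc0 hx
  have h1 : ContinuousAt (fun y : ℝ => 1/y) x :=
    ContinuousAt.div continuousAt_const continuousAt_id (ne_of_gt hx)
  have hE : ContinuousAt (fun y : ℝ => Real.exp (-(c*y))) x :=
    (Real.continuous_exp.comp ((continuous_const.mul continuous_id).neg)).continuousAt
  have h2 : ContinuousAt (fun y : ℝ => c*Real.exp (-(c*y))/(1 - Real.exp (-(c*y)))) x :=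
    ContinuousAt.div (continuousAt_const.mul hE) (continuousAt_const.sub hE) (ne_of_gt hA)
  exact (continuousAt_const.mul (h1.sub h2)).sub continuousAt_const

lemma exists_x0 {N : ℕ} {c : ℝ} (hN : 2 ≤ N) (hc0 : 0 < c) (hc1 : c < 1)
    (hδ : 0 < ((N:ℝ)+1)*c/2 - 1) :
    ∃ x0 : ℝ, 0 < x0 ∧ Hd N c x0 = 0 := by
  set δ := ((N:ℝ)+1)*c/2 - 1 with hδdef
  set a := min (δ/((1-c)*c)) 1 with ha
  have h1c : (0:ℝ) < 1-c := by linarith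
  have ha0 : 0 < a := by
    apply lt_min _ one_pos
    positivity
  set b := max a (((N:ℝ)-1)/(1-c) + 1) with hb
  have hab : a ≤ b := le_max_left _ _
  have hb0 : 0 < b := lt_of_lt_of_le ha0 hab
  have hHda : 0 < Hd N c a := by
    apply Hd_pos_small hN hc0 hc1 ha0
    have h2 : a ≤ δ/((1-c)*c) := min_le_left _ _
    have h3 : (1-c)*c*a ≤ δ := by
      rw [← le_div_iff₀' (by positivity)]
      exact h2
    have hgoal : (1-c)*c*a < 2*δ := by linarith
    rw [hδdef] at hgoal
    exact hgoal
  have hHdb : Hd N c b < 0 := by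
    apply Hd_neg_large hN hc0 hc1 hb0
    have := le_max_right a (((N:ℝ)-1)/(1-c) + 1)
    linarith
  have hcont : ContinuousOn (Hd N c) (Set.Icc a b) := by
    intro y hy
    exact (continuousAt_Hd hc0 (lt_of_lt_of_le ha0 hy.1)).continuousWithinAt
  have hIVT := intermediate_value_Icc' hab hcont
  have h0mem : (0:ℝ) ∈ Set.Icc (Hd N c b) (Hd N c a) := ⟨hHdb.le, hHda.le⟩
  obtain ⟨x0, hx0mem, hx0⟩ := hIVT h0mem
  exact ⟨x0, lt_of_lt_of_le ha0 hx0mem.1, hx0⟩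

set_option maxHeartbeats 1000000 in
lemma Hf_pos_small {N : ℕ} {c x : ℝ} (hN : 2 ≤ N) (hc0 : 0 < c) (hc1 : c < 1)
    (hlogc : Real.log c = -(1/(N:ℝ)) * Real.log (N.factorial : ℝ))
    (hx : 0 < x) (hcond : (1-c)*c*x < 2*(((N:ℝ)+1)*c/2 - 1)) :
    0 < Hf N c x := by
  have hNR : (2:ℝ) ≤ (N:ℝ) := by exact_mod_cast hN
  have hu : 0 < c*x := by positivity
  have hA := one_sub_exp_pos hc0 hx
  have h1c : (0:ℝ) < 1 - c := by linarith
  have ht0 : (0:ℝ) < 1 + c*x/2 := by positivity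
  have hb := AlzerAux.one_sub_exp_bound (le_of_lt hu)
  have hx_div : (1+c*x/2)/c ≤ x/(1 - Real.exp (-(c*x))) := by
    rw [div_le_div_iff₀ hc0 hA]
    nlinarith [hb]
  have hlog_ge := Real.log_le_log (by positivity) hx_div
  rw [Real.log_div (ne_of_gt ht0) (ne_of_gt hc0),
    Real.log_div (ne_of_gt hx) (ne_of_gt hA)] at hlog_ge
  have hN0 : (N:ℝ) ≠ 0 := by positivity
  have hfacN0 : (N.factorial:ℝ) ≠ 0 := by positivity
  have hf1 : ((N-1).factorial : ℝ) ≠ 0 := by positivity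
  have hfaceq : ((N-1).factorial:ℝ) * ((N:ℝ)*c) = (N.factorial:ℝ)*c := by
    have hh : (N:ℝ) * ((N-1).factorial:ℝ) = (N.factorial:ℝ) := by
      norm_cast
      exact Nat.mul_factorial_pred (by omega)
    linear_combination c * hh
  have hfac : Real.log (((N-1).factorial:ℝ) * ((N:ℝ)*c))
      = Real.log (N.factorial:ℝ) + Real.log c := by
    rw [hfaceq, Real.log_mul hfacN0 (ne_of_gt hc0)]
  have hNlogc : (N:ℝ) * Real.log c + Real.log (N.factorial:ℝ) = 0 := by
    rw [hlogc]; field_simp; ring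
  have hmul := mul_le_mul_of_nonneg_left hlog_ge (by linarith : (0:ℝ) ≤ (N:ℝ)-1)
  have hlog3 : (c*x/2)/(1+c*x/2) < Real.log (1+c*x/2) := by
    have h9 : (0:ℝ) < 1/(1+c*x/2) := by positivity
    have h10 : (1:ℝ)/(1+c*x/2) ≠ 1 := by
      have h14 : (1:ℝ) < 1 + c*x/2 := by nlinarith
      intro hcontra
      rw [div_eq_one_iff_eq (ne_of_gt ht0)] at hcontra
      linarith
    have h11 := Real.log_lt_sub_one_of_pos h9 h10
    rw [one_div, Real.log_inv] at h11
    have h13 : 1 - 1/(1+c*x/2) = (c*x/2)/(1+c*x/2) := by field_simp; ring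
    rw [← one_div] at h11
    linarith [h13.le, h13.ge]
  have h5 : (1-c)*(1+c*x/2) < ((N:ℝ)-1)*(c/2) := by nlinarith
  have h6 : (1-c)*x < ((N:ℝ)-1)*((c*x/2)/(1+c*x/2)) := by
    rw [mul_div_assoc', lt_div_iff₀ ht0]
    nlinarith
  have h7 : ((N:ℝ)-1)*((c*x/2)/(1+c*x/2)) ≤ ((N:ℝ)-1)*Real.log (1+c*x/2) :=
    mul_le_mul_of_nonneg_left hlog3.le (by linarith)
  unfold Hf
  rw [hfac]
  linarith [hmul, h6, h7, hNlogc]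

lemma Df_tendsto {N : ℕ} (hN : 2 ≤ N) {c : ℝ} (hc0 : 0 < c) :
    Filter.Tendsto (Df N c) Filter.atTop (nhds 0) := by
  have h1 : Filter.Tendsto (fun x => Real.exp (-x) * Pf N x) Filter.atTop (nhds 0) := by
    have heq : (fun x : ℝ => Real.exp (-x) * Pf N x)
        = fun x => ∑ n ∈ Finset.range N, (x^n * Real.exp (-x))/(n.factorial:ℝ) := by
      funext x; rw [Pf, Finset.mul_sum]
      apply Finset.sum_congr rfl; intro n _; ring
    rw [heq]
    have h0 : Filter.Tendsto
        (fun x : ℝ => ∑ n ∈ Finset.range N, (x^n * Real.exp (-x))/(n.factorial:ℝ))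
        Filter.atTop (nhds (∑ n ∈ Finset.range N, 0)) := by
      apply tendsto_finset_sum
      intro n _
      simpa using (tendsto_pow_mul_exp_neg_atTop_nhds_zero n).div_const (n.factorial:ℝ)
    simpa using h0
  have h2 : Filter.Tendsto (fun x : ℝ => Real.exp (-(c*x))) Filter.atTop (nhds 0) := by
    have hcomp : Filter.Tendsto (fun x : ℝ => c*x) Filter.atTop Filter.atTop :=
      Filter.Tendsto.const_mul_atTop hc0 Filter.tendsto_id
    exact Real.tendsto_exp_neg_atTop_nhds_zero.comp hcomp
  have h3 : Filter.Tendsto (fun x => Gf N c x) Filter.atTop (nhds 1) := by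
    have h4 : Filter.Tendsto (fun x : ℝ => 1 - Real.exp (-(c*x))) Filter.atTop (nhds 1) := by
      simpa using (tendsto_const_nhds (α := ℝ) (x := (1:ℝ)) (f := Filter.atTop)).sub h2
    have h5 := h4.pow N
    simpa [Gf] using h5
  have h6 := ((tendsto_const_nhds (α := ℝ) (x := (1:ℝ)) (f := Filter.atTop)).sub h1).sub h3
  have heq2 : (fun x => (1 - Real.exp (-x) * Pf N x) - Gf N c x) = Df N c := rfl
  rw [heq2] at h6
  simpa using h6

theorem Df_pos {N : ℕ} (hN : 2 ≤ N) {c : ℝ}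
    (hc : c = (N.factorial : ℝ) ^ (-(1 / N : ℝ))) {x : ℝ} (hx : 0 < x) :
    0 < Df N c x := by
  obtain ⟨hc0, hc1, hc2, hlogc⟩ := c_facts N hN hc
  have hNR : (2:ℝ) ≤ (N:ℝ) := by exact_mod_cast hN
  have hNpos : (0:ℝ) < (N:ℝ)+1 := by positivity
  have h1c : (0:ℝ) < 1-c := by linarith
  have hδ : 0 < ((N:ℝ)+1)*c/2 - 1 := by
    have := (div_lt_iff₀ hNpos).mp hc2
    nlinarith
  obtain ⟨x0, hx00, hx0⟩ := exists_x0 hN hc0 hc1 hδ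
  have hmono : StrictMonoOn (Hf N c) (Set.Ioc 0 x0) := by
    apply strictMonoOn_of_deriv_pos (convex_Ioc 0 x0)
    · intro y hy
      exact (hasDerivAt_Hf hc0 hy.1).continuousAt.continuousWithinAt
    · intro y hy
      rw [interior_Ioc] at hy
      rw [(hasDerivAt_Hf hc0 hy.1).deriv]
      have h8 := Hd_strictAnti hN hc0 (Set.mem_Ioi.mpr hy.1) (Set.mem_Ioi.mpr hx00) hy.2
      rw [hx0] at h8
      exact h8
  have hanti : StrictAntiOn (Hf N c) (Set.Ici x0) := by
    apply strictAntiOn_of_deriv_neg (convex_Ici x0)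
    · intro y hy
      exact (hasDerivAt_Hf hc0 (lt_of_lt_of_le hx00 hy)).continuousAt.continuousWithinAt
    · intro y hy
      rw [interior_Ici] at hy
      rw [(hasDerivAt_Hf hc0 (lt_trans hx00 hy)).deriv]
      have h8 := Hd_strictAnti hN hc0 (Set.mem_Ioi.mpr hx00)
        (Set.mem_Ioi.mpr (lt_trans hx00 hy)) hy
      rw [hx0] at h8
      exact h8
  have hHfIoc : ∀ y ∈ Set.Ioc 0 x0, 0 < Hf N c y := by
    intro y hy
    set m := min y ((((N:ℝ)+1)*c/2 - 1)/((1-c)*c)) with hm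
    have hm0 : 0 < m := lt_min hy.1 (by positivity)
    have hmcond : (1-c)*c*m < 2*(((N:ℝ)+1)*c/2 - 1) := by
      have h2 : m ≤ (((N:ℝ)+1)*c/2 - 1)/((1-c)*c) := min_le_right _ _
      have h3 : (1-c)*c*m ≤ (((N:ℝ)+1)*c/2 - 1) := by
        rw [← le_div_iff₀' (by positivity)]
        exact h2
      linarith
    have hfm := Hf_pos_small hN hc0 hc1 hlogc hm0 hmcond
    rcases eq_or_lt_of_le (min_le_left y ((((N:ℝ)+1)*c/2 - 1)/((1-c)*c))) with he | hl
    · rw [hm, he] at hfm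
      exact hfm
    · have h9 : Hf N c m < Hf N c y :=
        hmono ⟨hm0, le_trans (min_le_left _ _) hy.2⟩ hy hl
      linarith
  by_cases hcase : ∀ y, y ∈ Set.Ioo 0 x → 0 < Hf N c y
  · have hDmono : StrictMonoOn (Df N c) (Set.Icc 0 x) := by
      apply strictMonoOn_of_deriv_pos (convex_Icc 0 x)
      · intro y _
        exact (hasDerivAt_Df N c hN y).continuousAt.continuousWithinAt
      · intro y hy
        rw [interior_Icc] at hy
        rw [(hasDerivAt_Df N c hN y).deriv]
        have h9 := hcase y hy
        rw [Hf_pos_iff hN hc0 hy.1] at h9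
        linarith
    have hD0 : Df N c 0 = 0 := by
      have hsum : ∑ n ∈ Finset.range N, (0:ℝ)^n/(n.factorial:ℝ) = 1 := by
        rw [Finset.sum_eq_single 0]
        · norm_num
        · intro b _ hb
          rw [zero_pow hb]
          simp
        · intro h
          exact absurd (Finset.mem_range.mpr (by omega)) h
      unfold Df Gf Pf
      have hNe : N ≠ 0 := by omega
      rw [mul_zero, neg_zero, Real.exp_zero, hsum]
      norm_num [zero_pow hNe]
    have h10 := hDmono (Set.left_mem_Icc.mpr hx.le) (Set.right_mem_Icc.mpr hx.le) hx
    rw [hD0] at h10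
    exact h10
  · push_neg at hcase
    obtain ⟨y, hy, hHfy⟩ := hcase
    have hyx0 : x0 < y := by
      by_contra hle
      push_neg at hle
      exact absurd (hHfIoc y ⟨hy.1, hle⟩) (not_lt.mpr hHfy)
    have hneg : ∀ z, x < z → Hf N c z < 0 := by
      intro z hz
      have h11 : Hf N c z < Hf N c y :=
        hanti (Set.mem_Ici.mpr hyx0.le) (Set.mem_Ici.mpr (by linarith [hy.2] : x0 ≤ z))
          (by linarith [hy.2])
      linarith
    have hDanti : StrictAntiOn (Df N c) (Set.Ici x) := by
      apply strictAntiOn_of_deriv_neg (convex_Ici x)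
      · intro z _
        exact (hasDerivAt_Df N c hN z).continuousAt.continuousWithinAt
      · intro z hz
        rw [interior_Ici] at hz
        rw [(hasDerivAt_Df N c hN z).deriv]
        have hz0 : 0 < z := lt_trans hx hz
        have h12 := hneg z hz
        rw [Hf_neg_iff hN hc0 hz0] at h12
        linarith
    have hlim := Df_tendsto hN hc0
    have hD1 : 0 ≤ Df N c (x+1) := by
      apply le_of_tendsto hlim
      filter_upwards [Filter.eventually_ge_atTop (x+1)] with z hz
      rcases eq_or_lt_of_le hz with he | hl
      · rw [← he]
      · exact (hDanti (Set.mem_Ici.mpr (by linarith)) (Set.mem_Ici.mpr (by linarith)) hl).le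
    have h13 := hDanti (Set.mem_Ici.mpr le_rfl) (Set.mem_Ici.mpr (by linarith : x ≤ x+1))
      (by linarith : x < x+1)
    linarith

lemma binom_id (N : ℕ) (t : ℝ) :
    ∑ n ∈ Finset.Icc 1 N, (-1:ℝ)^(n-1) * (N.choose n : ℝ) * t^n = 1 - (1-t)^N := by
  have hset : Finset.range (N+1) = insert 0 (Finset.Icc 1 N) := by
    ext k
    simp only [Finset.mem_range, Finset.mem_insert, Finset.mem_Icc]
    omega
  have h0 : ((-t)+1)^N = ∑ k ∈ Finset.range (N+1), (-t)^k * (N.choose k : ℝ) := by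
    rw [add_pow]
    apply Finset.sum_congr rfl
    intro k _
    rw [one_pow, mul_one]
  rw [hset, Finset.sum_insert (by simp)] at h0
  have h2 : ∀ n ∈ Finset.Icc 1 N,
      (-1:ℝ)^(n-1) * (N.choose n:ℝ) * t^n = -((-t)^n * (N.choose n:ℝ)) := by
    intro n hn
    rw [Finset.mem_Icc] at hn
    obtain ⟨m, rfl⟩ : ∃ m, n = m+1 := ⟨n-1, by omega⟩
    rw [show ((-t):ℝ)^(m+1) = (-1:ℝ)^(m+1) * t^(m+1) by rw [← neg_one_mul, mul_pow]]
    simp only [Nat.add_sub_cancel, pow_succ]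
    ring
  rw [Finset.sum_congr rfl h2, Finset.sum_neg_distrib]
  simp only [pow_zero, one_mul, Nat.choose_zero_right, Nat.cast_one] at h0
  have hre : ((-t)+1)^N = (1-t)^N := by ring_nf
  rw [hre] at h0
  linarith

end Alzer


/-- **Proposition 1 (Alzer-type bound).** For a random variable `X > 0` a.s., `N ≥ 2` and
`s' > 0`, with `c = (N!)^(-1/N)`, the partial sum
`∑_{n=0}^{N-1} (1/n!) E[(s'X)^n e^{-s'X}]` is strictly less than
`∑_{n=1}^{N} (-1)^(n-1) (N choose n) E[e^{-n c s' X}]`. -/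
theorem alzer_bound_laplace {Ω : Type*} [MeasureSpace Ω]
    [IsProbabilityMeasure (ℙ : Measure Ω)]
    (X : Ω → ℝ) (hX : Measurable X) (hXpos : ∀ᵐ ω ∂(ℙ : Measure Ω), 0 < X ω)
    (N : ℕ) (hN : 2 ≤ N) (s' : ℝ) (hs' : 0 < s')
    (c : ℝ) (hc : c = (N.factorial : ℝ) ^ (-(1 / N : ℝ))) :
    ∑ n ∈ Finset.range N,
        (1 / n.factorial : ℝ) * ∫ ω, (s' * X ω) ^ n * Real.exp (-(s' * X ω)) <
      ∑ n ∈ Finset.Icc 1 N,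
        (-1 : ℝ) ^ (n - 1) * (N.choose n : ℝ) *
          ∫ ω, Real.exp (-((n : ℝ) * c * s' * X ω)) := by
  obtain ⟨hc0, hc1, hc2, hlogc⟩ := Alzer.c_facts N hN hc
  have hXm : Measurable fun ω => s' * X ω := hX.const_mul s'
  have hintf : ∀ n : ℕ,
      Integrable (fun ω => (s' * X ω)^n * Real.exp (-(s' * X ω))) (ℙ : Measure Ω) := by
    intro n
    apply Integrable.mono' (integrable_const ((n.factorial : ℝ)))
    · exact ((hXm.pow_const n).mul ((hXm.neg).exp)).aestronglyMeasurable
    · filter_upwards [hXpos] with ω hω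
      have ht : 0 < s' * X ω := by positivity
      set t := s' * X ω with htdef
      have h2 := Real.sum_le_exp_of_nonneg ht.le (n+1)
      have h3 : t^n/(n.factorial:ℝ) ≤ ∑ i ∈ Finset.range (n+1), t^i/(i.factorial:ℝ) :=
        Finset.single_le_sum (f := fun i => t^i/(i.factorial:ℝ))
          (fun i _ => by positivity) (Finset.self_mem_range_succ n)
      have h1 : t^n/(n.factorial:ℝ) ≤ Real.exp t := le_trans h3 h2
      rw [Real.norm_eq_abs, abs_of_nonneg (by positivity)]
      rw [Real.exp_neg]
      have hfn : (0:ℝ) < (n.factorial:ℝ) := by positivity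
      have hexp : (0:ℝ) < Real.exp t := Real.exp_pos t
      rw [div_le_iff₀ hfn] at h1
      calc t^n * (Real.exp t)⁻¹ ≤ (Real.exp t * (n.factorial:ℝ)) * (Real.exp t)⁻¹ :=
            mul_le_mul_of_nonneg_right h1 (by positivity)
        _ = (n.factorial:ℝ) := by field_simp
  have hintg : ∀ n : ℕ,
      Integrable (fun ω => Real.exp (-((n:ℝ) * c * s' * X ω))) (ℙ : Measure Ω) := by
    intro n
    apply Integrable.mono' (integrable_const (1:ℝ))
    · exact (((hX.const_mul ((n:ℝ)*c*s')).neg).exp).aestronglyMeasurable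
    · filter_upwards [hXpos] with ω hω
      rw [Real.norm_eq_abs, abs_of_nonneg (Real.exp_pos _).le]
      have hk : (0:ℝ) ≤ (n:ℝ)*c*s'*X ω := by
        have h4 := mul_nonneg (mul_nonneg (mul_nonneg n.cast_nonneg hc0.le) hs'.le) hω.le
        linarith
      calc Real.exp (-((n:ℝ)*c*s'*X ω)) ≤ Real.exp 0 := Real.exp_le_exp.mpr (by linarith)
        _ = 1 := Real.exp_zero
  have hL : ∑ n ∈ Finset.range N,
        (1 / (n.factorial : ℝ)) * ∫ ω, (s' * X ω) ^ n * Real.exp (-(s' * X ω))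
      = ∫ ω, ∑ n ∈ Finset.range N,
          (1 / (n.factorial : ℝ)) * ((s' * X ω) ^ n * Real.exp (-(s' * X ω))) := by
    rw [integral_finset_sum _ (fun n _ => (hintf n).const_mul _)]
    apply Finset.sum_congr rfl
    intro n _
    rw [integral_const_mul]
  have hR : ∑ n ∈ Finset.Icc 1 N,
        (-1 : ℝ) ^ (n - 1) * (N.choose n : ℝ) * ∫ ω, Real.exp (-((n : ℝ) * c * s' * X ω))
      = ∫ ω, ∑ n ∈ Finset.Icc 1 N,
          (-1 : ℝ) ^ (n - 1) * (N.choose n : ℝ) * Real.exp (-((n : ℝ) * c * s' * X ω)) := by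
    rw [integral_finset_sum _ (fun n _ => (hintg n).const_mul _)]
    apply Finset.sum_congr rfl
    intro n _
    rw [integral_const_mul]
  rw [hL, hR]
  set f1 : Ω → ℝ := fun ω => ∑ n ∈ Finset.range N,
      (1 / (n.factorial : ℝ)) * ((s' * X ω) ^ n * Real.exp (-(s' * X ω))) with hf1
  set f2 : Ω → ℝ := fun ω => ∑ n ∈ Finset.Icc 1 N,
      (-1 : ℝ) ^ (n - 1) * (N.choose n : ℝ) * Real.exp (-((n : ℝ) * c * s' * X ω)) with hf2
  have hint1 : Integrable f1 (ℙ : Measure Ω) :=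
    integrable_finset_sum _ (fun n _ => (hintf n).const_mul _)
  have hint2 : Integrable f2 (ℙ : Measure Ω) :=
    integrable_finset_sum _ (fun n _ => (hintg n).const_mul _)
  have hptwise : ∀ᵐ ω ∂(ℙ : Measure Ω), 0 < f2 ω - f1 ω := by
    filter_upwards [hXpos] with ω hω
    have hy : 0 < s' * X ω := by positivity
    have hdf := Alzer.Df_pos hN hc hy
    have e1 : f1 ω = Real.exp (-(s' * X ω)) * Alzer.Pf N (s' * X ω) := by
      rw [hf1]
      simp only []
      rw [Alzer.Pf, Finset.mul_sum]
      apply Finset.sum_congr rfl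
      intro n _
      ring
    have e2 : f2 ω = 1 - Alzer.Gf N c (s' * X ω) := by
      rw [hf2]
      simp only []
      rw [show Alzer.Gf N c (s' * X ω) = (1 - Real.exp (-(c * (s' * X ω))))^N from rfl]
      rw [← Alzer.binom_id N (Real.exp (-(c * (s' * X ω))))]
      apply Finset.sum_congr rfl
      intro n _
      congr 1
      rw [← Real.exp_nat_mul]
      congr 1
      ring
    rw [e1, e2]
    have hDf : Alzer.Df N c (s' * X ω)
        = (1 - Real.exp (-(s' * X ω)) * Alzer.Pf N (s' * X ω)) - Alzer.Gf N c (s' * X ω) := rfl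
    rw [hDf] at hdf
    linarith
  have hsub : Integrable (fun ω => f2 ω - f1 ω) (ℙ : Measure Ω) := hint2.sub hint1
  have hpos : 0 < ∫ ω, (f2 ω - f1 ω) ∂(ℙ : Measure Ω) := by
    rw [integral_pos_iff_support_of_nonneg_ae
      (hptwise.mono (fun ω h => h.le)) hsub]
    have hsupp : ∀ᵐ ω ∂(ℙ : Measure Ω), ω ∈ Function.support (fun ω => f2 ω - f1 ω) :=
      hptwise.mono (fun ω h => ne_of_gt h)
    rw [MeasureTheory.ae_iff] at hsupp
    have hcompl : (ℙ : Measure Ω) (Function.support fun ω => f2 ω - f1 ω)ᶜ = 0 := hsupp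
    have huniv : (ℙ : Measure Ω) Set.univ = 1 := measure_univ
    have hle : (ℙ : Measure Ω) Set.univ
        ≤ (ℙ : Measure Ω) (Function.support fun ω => f2 ω - f1 ω)
          + (ℙ : Measure Ω) (Function.support fun ω => f2 ω - f1 ω)ᶜ := by
      rw [← Set.union_compl_self (Function.support fun ω => f2 ω - f1 ω)]
      exact measure_union_le _ _
    rw [huniv, hcompl, add_zero] at hle
    exact lt_of_lt_of_le (by norm_num) hle
  rw [integral_sub hint2 hint1] at hpos
  linarith
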